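/- Let v ∈ H satisfy I(v) := Σ_j‖v_j‖_Σ² − Σ_{j,k}a_{jk}∫|v_jv_k|^p dx ≤ 0 and K(v) := (2/N)Σ_j(‖∇v_j‖² − ‖xv_j‖²) − ((p−1)/p)Σ_{j,k}a_{jk}∫|v_jv_k|^p dx ≤ 0, with p > p₁ := 1 + (2/N²)(1+√(1+N²)). Then for v_λ(x) := λ^{N/2}v(λx), there exists δ > 0 such that K(v_λ) < 0 for all λ ∈ (1, 1+δ). -/

import Mathlib

open MeasureTheory

/-- The Virial functional `K = K_{1,−2/N}`. -/
noncomputable def KV (N m : ℕ) (p : ℝ) (a : Fin m → Fin m → ℝ)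
    (v : Fin m → EuclideanSpace ℝ (Fin N) → ℂ) : ℝ :=
  (2/(N:ℝ)) * (∑ j, ((∫ x, ‖fderiv ℝ (v j) x‖^2) - ∫ x, ‖x‖^2 * ‖v j x‖^2))
    - ((p-1)/p) * ∑ j, ∑ k, a j k * ∫ x, (‖v j x‖ * ‖v k x‖) ^ p

/-- The Nehari functional `I = K_{1,0}`. -/
noncomputable def IV (N m : ℕ) (p : ℝ) (a : Fin m → Fin m → ℝ)
    (v : Fin m → EuclideanSpace ℝ (Fin N) → ℂ) : ℝ :=
  (∑ j, ((∫ x, ‖v j x‖^2) + (∫ x, ‖x‖^2 * ‖v j x‖^2)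
      + (∫ x, ‖fderiv ℝ (v j) x‖^2)))
    - ∑ j, ∑ k, a j k * ∫ x, (‖v j x‖ * ‖v k x‖) ^ p

/-- The `L²`-invariant scaling `v_λ(x) = λ^{N/2} v(λ x)`. -/
noncomputable def scaleL (N : ℕ) (lam : ℝ)
    (v : EuclideanSpace ℝ (Fin N) → ℂ) : EuclideanSpace ℝ (Fin N) → ℂ :=
  fun x => (lam ^ ((N:ℝ)/2) : ℝ) • v (lam • x)

section Aux

variable {N : ℕ}

lemma csq_aux {lam : ℝ} (hlam : 0 < lam) :
    (lam ^ ((N:ℝ)/2)) ^ 2 = lam ^ N := by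
  rw [← Real.rpow_natCast (lam ^ ((N:ℝ)/2)) 2, ← Real.rpow_mul hlam.le]
  norm_num

lemma fderiv_scaleL {lam : ℝ} (hlam : 0 < lam) (w : EuclideanSpace ℝ (Fin N) → ℂ)
    (hw : Differentiable ℝ w) (x : EuclideanSpace ℝ (Fin N)) :
    fderiv ℝ (scaleL N lam w) x
      = (lam ^ ((N:ℝ)/2)) • (lam • (fderiv ℝ w (lam • x))) := by
  have hinner : Differentiable ℝ (fun y : EuclideanSpace ℝ (Fin N) => w (lam • y)) :=
    hw.comp (differentiable_id.const_smul lam)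
  have h1 : fderiv ℝ (scaleL N lam w) x
      = (lam ^ ((N:ℝ)/2)) • fderiv ℝ (fun y => w (lam • y)) x := by
    rw [show scaleL N lam w = (lam ^ ((N:ℝ)/2)) • (fun y => w (lam • y)) from rfl]
    exact fderiv_const_smul (hinner x) _
  rw [h1]
  congr 1
  have hL : (fun y : EuclideanSpace ℝ (Fin N) => w (lam • y))
      = w ∘ (lam • ContinuousLinearMap.id ℝ (EuclideanSpace ℝ (Fin N))) := rfl
  rw [hL, fderiv_comp x (hw _) ((lam • ContinuousLinearMap.id ℝ _).differentiableAt),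
    ContinuousLinearMap.fderiv]
  simp [ContinuousLinearMap.comp_smul]

lemma integral_grad_scale {lam : ℝ} (hlam : 0 < lam) (w : EuclideanSpace ℝ (Fin N) → ℂ)
    (hw : Differentiable ℝ w) :
    (∫ x, ‖fderiv ℝ (scaleL N lam w) x‖^2)
      = lam ^ 2 * ∫ x, ‖fderiv ℝ w x‖^2 := by
  have h : ∀ x : EuclideanSpace ℝ (Fin N), ‖fderiv ℝ (scaleL N lam w) x‖^2
      = (lam ^ N * lam ^ 2) * (fun y => ‖fderiv ℝ w y‖^2) (lam • x) := by
    intro x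
    rw [fderiv_scaleL hlam w hw x, smul_smul,
      norm_smul (lam ^ ((N:ℝ)/2) * lam) (fderiv ℝ w (lam • x))]
    simp only [Real.norm_eq_abs, abs_of_pos (mul_pos (Real.rpow_pos_of_pos hlam _) hlam)]
    rw [mul_pow, mul_pow, csq_aux hlam]
  simp_rw [h]
  rw [integral_const_mul,
    Measure.integral_comp_smul volume (fun y => ‖fderiv ℝ w y‖^2) lam,
    finrank_euclideanSpace_fin, smul_eq_mul,
    abs_of_pos (by positivity : (0:ℝ) < (lam ^ N)⁻¹)]
  field_simp

lemma integral_weight_scale {lam : ℝ} (hlam : 0 < lam) (w : EuclideanSpace ℝ (Fin N) → ℂ) :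
    (∫ x, ‖x‖^2 * ‖scaleL N lam w x‖^2)
      = (lam⁻¹) ^ 2 * ∫ x, ‖x‖^2 * ‖w x‖^2 := by
  have h : ∀ x : EuclideanSpace ℝ (Fin N), ‖x‖^2 * ‖scaleL N lam w x‖^2
      = (lam ^ N * (lam⁻¹) ^ 2) * (fun y => ‖y‖^2 * ‖w y‖^2) (lam • x) := by
    intro x
    simp only [scaleL, norm_smul, Real.norm_eq_abs, abs_of_pos hlam,
      abs_of_pos (Real.rpow_pos_of_pos hlam _)]
    rw [mul_pow, csq_aux hlam]
    field_simp
  simp_rw [h]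
  rw [integral_const_mul,
    Measure.integral_comp_smul volume (fun y => ‖y‖^2 * ‖w y‖^2) lam,
    finrank_euclideanSpace_fin, smul_eq_mul,
    abs_of_pos (by positivity : (0:ℝ) < (lam ^ N)⁻¹)]
  field_simp

lemma integral_nl_scale {lam p : ℝ} (hlam : 0 < lam) (w1 w2 : EuclideanSpace ℝ (Fin N) → ℂ) :
    (∫ x, (‖scaleL N lam w1 x‖ * ‖scaleL N lam w2 x‖) ^ p)
      = lam ^ ((N:ℝ)*(p-1)) * ∫ x, (‖w1 x‖ * ‖w2 x‖) ^ p := by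
  have hc : (0:ℝ) < lam ^ ((N:ℝ)/2) := Real.rpow_pos_of_pos hlam _
  have h : ∀ x : EuclideanSpace ℝ (Fin N),
      (‖scaleL N lam w1 x‖ * ‖scaleL N lam w2 x‖) ^ p
      = lam ^ ((N:ℝ)*p) * (fun y => (‖w1 y‖ * ‖w2 y‖) ^ p) (lam • x) := by
    intro x
    simp only [scaleL, norm_smul, Real.norm_eq_abs, abs_of_pos hc]
    have : lam ^ ((N:ℝ)/2) * ‖w1 (lam • x)‖ * (lam ^ ((N:ℝ)/2) * ‖w2 (lam • x)‖)
        = (lam ^ ((N:ℝ)/2))^2 * (‖w1 (lam • x)‖ * ‖w2 (lam • x)‖) := by ring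
    rw [this, csq_aux hlam, Real.mul_rpow (by positivity) (by positivity),
      ← Real.rpow_natCast lam N, ← Real.rpow_mul hlam.le]
  simp_rw [h]
  rw [integral_const_mul,
    Measure.integral_comp_smul volume (fun y => (‖w1 y‖ * ‖w2 y‖) ^ p) lam,
    finrank_euclideanSpace_fin, smul_eq_mul,
    abs_of_pos (by positivity : (0:ℝ) < (lam ^ N)⁻¹), ← mul_assoc]
  congr 1
  rw [← Real.rpow_natCast lam N, ← Real.rpow_neg hlam.le, ← Real.rpow_add hlam]
  ring_nf

end Aux

set_option maxHeartbeats 2000000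

/-- If `I(v) ≤ 0` and `K(v) ≤ 0` with `p > p₁`, then `K(v_λ) < 0` for `λ > 1`
close to `1`. -/
theorem stmt_16 (N m : ℕ) (hN : 2 ≤ N) (p : ℝ)
    (hp : 1 + 2/(N:ℝ)^2 * (1 + Real.sqrt (1 + (N:ℝ)^2)) < p)
    (a : Fin m → Fin m → ℝ) (ha : ∀ j k, 0 < a j k) (hsym : ∀ j k, a j k = a k j)
    (v : Fin m → EuclideanSpace ℝ (Fin N) → ℂ)
    (hd : ∀ j, Differentiable ℝ (v j))
    (h2 : ∀ j, Integrable (fun x => ‖v j x‖^2))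
    (hx : ∀ j, Integrable (fun x => ‖x‖^2 * ‖v j x‖^2))
    (hg : ∀ j, Integrable (fun x => ‖fderiv ℝ (v j) x‖^2))
    (hnl : ∀ j k, Integrable (fun x => (‖v j x‖ * ‖v k x‖) ^ p))
    (hnz : v ≠ 0)
    (hI : IV N m p a v ≤ 0) (hK : KV N m p a v ≤ 0) :
    ∃ δ > (0:ℝ), ∀ lam : ℝ, 1 < lam → lam < 1 + δ →
      KV N m p a (fun j => scaleL N lam (v j)) < 0 := by
  have hn : (0:ℝ) < (N:ℝ) := by exact_mod_cast Nat.pos_of_ne_zero (by omega)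
  set n : ℝ := (N:ℝ) with hndef
  have hn2 : (2:ℝ) ≤ n := by rw [hndef]; exact_mod_cast hN
  -- basic positivity of p
  set s : ℝ := Real.sqrt (1 + n^2) with hsdef
  have hs0 : 0 ≤ s := Real.sqrt_nonneg _
  have hs : s^2 = 1 + n^2 := Real.sq_sqrt (by positivity)
  have hp1 : 1 < p := by
    have hge : 0 ≤ 2/n^2 * (1 + s) := by positivity
    linarith
  have hp0 : (0:ℝ) < p := by linarith
  -- the key inequality `4p < n²(p-1)²`
  have h1 : 2*(1+s) < n^2*(p-1) := by
    have h := hp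
    rw [div_mul_eq_mul_div, ← sub_pos] at h
    have h2' : 0 < p - 1 - 2*(1+s)/n^2 := by
      have : p - (1 + 2 * (1 + s) / n ^ 2) = p - 1 - 2*(1+s)/n^2 := by ring
      linarith [this ▸ h]
    have := mul_pos h2' (by positivity : (0:ℝ) < n^2)
    have hne : n^2 ≠ 0 := by positivity
    calc 2*(1+s) = (2*(1+s)/n^2) * n^2 := by field_simp
    _ < (p-1) * n^2 := by nlinarith
    _ = n^2*(p-1) := by ring
  have key : 4*p < n^2*(p-1)^2 := by
    nlinarith [sq_nonneg (n^2*(p-1) - 2 - 2*s), h1, hs, hs0, sq_nonneg n]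
  -- unfold the functionals
  simp only [IV] at hI
  rw [Finset.sum_add_distrib, Finset.sum_add_distrib] at hI
  simp only [KV] at hK
  rw [Finset.sum_sub_distrib] at hK
  set M : ℝ := ∑ j, ∫ x, ‖v j x‖^2 with hMdef
  set X : ℝ := ∑ j, ∫ x, ‖x‖^2 * ‖v j x‖^2 with hXdef
  set G : ℝ := ∑ j, ∫ x, ‖fderiv ℝ (v j) x‖^2 with hGdef
  set S : ℝ := ∑ j, ∑ k, a j k * ∫ x, (‖v j x‖ * ‖v k x‖) ^ p with hSdef
  have hM0 : 0 ≤ M := Finset.sum_nonneg fun j _ =>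
    integral_nonneg fun x => by positivity
  have hX0 : 0 ≤ X := Finset.sum_nonneg fun j _ =>
    integral_nonneg fun x => by positivity
  have hG0 : 0 ≤ G := Finset.sum_nonneg fun j _ =>
    integral_nonneg fun x => by positivity
  -- S is positive
  have hS : 0 < S := by
    rcases lt_or_ge 0 S with h | h
    · exact h
    exfalso
    have hM : M = 0 := le_antisymm (by linarith) hM0
    apply hnz
    funext j
    have hj : (∫ x, ‖v j x‖^2) = 0 := by
      have := (Finset.sum_eq_zero_iff_of_nonneg (fun j _ =>
        integral_nonneg (fun x => by positivity : ∀ x, (0:ℝ) ≤ ‖v j x‖^2))).mp hM j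
        (Finset.mem_univ j)
      exact this
    have hae : (fun x => ‖v j x‖^2) =ᵐ[volume] 0 :=
      (integral_eq_zero_iff_of_nonneg (fun x => by positivity) (h2 j)).mp hj
    have hcont : Continuous (fun x => ‖v j x‖^2) := ((hd j).continuous.norm.pow 2)
    have heq : (fun x => ‖v j x‖^2) = (0 : EuclideanSpace ℝ (Fin N) → ℝ) :=
      (Continuous.ae_eq_iff_eq volume hcont continuous_const).mp hae
    funext x
    have : ‖v j x‖^2 = 0 := congrFun heq x
    have : ‖v j x‖ = 0 := by nlinarith [norm_nonneg (v j x)]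
    simpa using this
  have hGX : G + X ≤ S := by linarith
  -- abbreviations for the final algebra
  set c : ℝ := (p-1)/p with hcdef
  have hc : 0 < c := div_pos (by linarith) hp0
  have hcp : c * p = p - 1 := div_mul_cancel₀ _ (ne_of_gt hp0)
  set q : ℝ := n*(p-1) with hqdef
  have hq0 : 0 < q := by nlinarith
  have hq1 : 1 ≤ q := by nlinarith [key, sq_nonneg (q - 2)]
  have hncq : 4 < n*c*q := by
    have hmul : (n*c*q)*p = n^2*(p-1)^2 := by
      rw [hqdef]; nlinarith [hcp]
    nlinarith [key, hp0]
  refine ⟨n*c*q/2 - 2, by linarith, fun lam hl1 hl2 => ?_⟩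
  have hl0 : (0:ℝ) < lam := by linarith
  -- compute KV of the scaled family
  have e1 : ∀ j, (∫ x, ‖fderiv ℝ (scaleL N lam (v j)) x‖^2)
      = lam^2 * ∫ x, ‖fderiv ℝ (v j) x‖^2 := fun j => integral_grad_scale hl0 (v j) (hd j)
  have e2 : ∀ j, (∫ x, ‖x‖^2 * ‖scaleL N lam (v j) x‖^2)
      = (lam⁻¹)^2 * ∫ x, ‖x‖^2 * ‖v j x‖^2 := fun j => integral_weight_scale hl0 (v j)
  have e3 : ∀ j k, (∫ x, (‖scaleL N lam (v j) x‖ * ‖scaleL N lam (v k) x‖) ^ p)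
      = lam ^ (n*(p-1)) * ∫ x, (‖v j x‖ * ‖v k x‖) ^ p :=
    fun j k => integral_nl_scale hl0 (v j) (v k)
  have hKV : KV N m p a (fun j => scaleL N lam (v j))
      = (2/n) * (lam^2 * G - (lam⁻¹)^2 * X) - c * (lam ^ q * S) := by
    simp only [KV, e1, e2, e3]
    rw [Finset.sum_sub_distrib, ← Finset.mul_sum, ← Finset.mul_sum]
    have : ∑ j, ∑ k, a j k * (lam ^ (n*(p-1)) * ∫ x, (‖v j x‖ * ‖v k x‖) ^ p)
        = lam ^ (n*(p-1)) * S := by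
      rw [hSdef, Finset.mul_sum]
      refine Finset.sum_congr rfl fun j _ => ?_
      rw [Finset.mul_sum]
      exact Finset.sum_congr rfl fun k _ => by ring
    rw [this, ← hGdef, ← hXdef]
  rw [hKV]
  -- Bernoulli and AM–GM facts
  set B : ℝ := lam ^ q with hBdef
  have hB : 1 + q*(lam - 1) ≤ B := by
    have := one_add_mul_self_le_rpow_one_add (s := lam - 1) (by linarith) hq1
    simpa [hBdef] using this
  have hu : 2 ≤ lam^2 + (lam⁻¹)^2 := by
    have h := mul_inv_cancel₀ (ne_of_gt hl0)
    nlinarith [sq_nonneg (lam - lam⁻¹)]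
  have h2n : (0:ℝ) < 2/n := by positivity
  -- main chain of estimates
  have A0 : lam^2*G - (lam⁻¹)^2*X ≤ (G - X) + (lam^2-1)*S := by
    have hX2 : 0 ≤ X * (lam^2 + (lam⁻¹)^2 - 2) := mul_nonneg hX0 (by linarith)
    nlinarith [mul_le_mul_of_nonneg_left hGX (by nlinarith : (0:ℝ) ≤ lam^2 - 1)]
  have A1 : (2/n)*(lam^2*G - (lam⁻¹)^2*X)
      ≤ (2/n)*(G-X) + (2/n)*((lam^2-1)*S) := by
    nlinarith [mul_le_mul_of_nonneg_left A0 h2n.le]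
  have A2 : (2/n)*(G-X) ≤ c*S := by linarith
  have hδ2 : (2/n)*(2 + (n*c*q/2 - 2)) = c*q := by field_simp; ring
  have A4 : (2/n)*((lam^2-1)*S) < (lam-1)*(c*q)*S := by
    have h : (2/n)*(lam^2-1) < (lam-1)*(c*q) := by
      nlinarith [mul_pos (sub_pos.mpr hl1) h2n, hl2, hδ2]
    nlinarith [mul_lt_mul_of_pos_right h hS]
  have A5 : c*S + (lam-1)*(c*q)*S ≤ c*(B*S) := by
    nlinarith [mul_le_mul_of_nonneg_left hB (mul_pos hc hS).le]
  linarith
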